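/- Let π be a generalized permutation of type (l,m) satisfying the convention, and let (λ_α)_{α∈𝒜} be positive real numbers with Σ_{i=1}^{l} λ_{π(i)} = Σ_{j=1}^{m} λ_{π(l+j)}. Then there exists a suspension data ζ for π with Re ζ_α = λ_α for every α if and only if π is irreducible. -/

import Mathlib

open Finset

/-- A generalized permutation of type `(l, m)`: a map from positions `1, …, l + m`
(the top line being positions `1, …, l` and the bottom line positions `l+1, …, l+m`)
to an alphabet `A`, such that every letter has exactly two preimages. -/
structure GenPerm (A : Type*) [DecidableEq A] where
  l : ℕ
  m : ℕ
  p : ℕ → A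
  double : ∀ a : A, ((Finset.Icc 1 (l + m)).filter (fun i => p i = a)).card = 2

namespace GenPerm

variable {A : Type*} [DecidableEq A]

/-- Total number of positions, `l + m = 2d`. -/
def size (π : GenPerm A) : ℕ := π.l + π.m

/-- The multiset of letters occupying positions `a, a+1, …, b`. -/
def seg (π : GenPerm A) (a b : ℕ) : Multiset A :=
  (Finset.Icc a b).val.map π.p

/-- `i` and `j` are the two positions of a common letter (i.e. `j = σ(i)` where `σ` is the
fixed-point-free involution associated to `π`). -/
def IsTwin (π : GenPerm A) (i j : ℕ) : Prop :=
  1 ≤ i ∧ i ≤ π.size ∧ 1 ≤ j ∧ j ≤ π.size ∧ i ≠ j ∧ π.p i = π.p j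

/-- The convention: some letter has both occurrences on the top line, and some letter has
both occurrences on the bottom line. -/
def Convention (π : GenPerm A) : Prop :=
  (∃ i j, π.IsTwin i j ∧ i ≤ π.l ∧ j ≤ π.l) ∧
  (∃ i j, π.IsTwin i j ∧ π.l < i ∧ π.l < j)

/-- `π` is reducible: it admits a decomposition with corners `A∪B`, `D∪B`, `A∪C`, `D∪C`
(for disjoint, not all empty, subsets `A,B,C,D` of the alphabet) such that (i) no corner is
empty, or (ii) exactly one corner is empty and it is a left one, or (iii) exactly two corners
are empty and they are both left or both right. -/
def Reducible (π : GenPerm A) : Prop :=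
  ∃ (As Bs Cs Ds : Finset A) (i1 i2 i3 i4 : ℕ),
    Disjoint As Bs ∧ Disjoint As Cs ∧ Disjoint As Ds ∧
    Disjoint Bs Cs ∧ Disjoint Bs Ds ∧ Disjoint Cs Ds ∧
    ¬(As = ∅ ∧ Bs = ∅ ∧ Cs = ∅ ∧ Ds = ∅) ∧
    i1 ≤ i2 ∧ i2 ≤ π.l ∧ π.l ≤ i3 ∧ i3 ≤ i4 ∧ i4 ≤ π.size ∧
    π.seg 1 i1 = As.val + Bs.val ∧
    π.seg (i2 + 1) π.l = Ds.val + Bs.val ∧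
    π.seg (π.l + 1) i3 = As.val + Cs.val ∧
    π.seg (i4 + 1) π.size = Ds.val + Cs.val ∧
    ((π.seg 1 i1 ≠ 0 ∧ π.seg (i2 + 1) π.l ≠ 0 ∧ π.seg (π.l + 1) i3 ≠ 0 ∧
        π.seg (i4 + 1) π.size ≠ 0) ∨
     (π.seg 1 i1 = 0 ∧ π.seg (i2 + 1) π.l ≠ 0 ∧ π.seg (π.l + 1) i3 ≠ 0 ∧
        π.seg (i4 + 1) π.size ≠ 0) ∨
     (π.seg 1 i1 ≠ 0 ∧ π.seg (i2 + 1) π.l ≠ 0 ∧ π.seg (π.l + 1) i3 = 0 ∧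
        π.seg (i4 + 1) π.size ≠ 0) ∨
     (π.seg 1 i1 = 0 ∧ π.seg (i2 + 1) π.l ≠ 0 ∧ π.seg (π.l + 1) i3 = 0 ∧
        π.seg (i4 + 1) π.size ≠ 0) ∨
     (π.seg 1 i1 ≠ 0 ∧ π.seg (i2 + 1) π.l = 0 ∧ π.seg (π.l + 1) i3 ≠ 0 ∧
        π.seg (i4 + 1) π.size = 0))

/-- `π` is irreducible if it is not reducible. -/
def Irreducible (π : GenPerm A) : Prop := ¬ π.Reducible

/-- `π` is strongly irreducible if every decomposition with corners `A∪B`, `D∪B`, `A∪C`,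
`D∪C` (for disjoint subsets) has all four corners empty. -/
def StronglyIrreducible (π : GenPerm A) : Prop :=
  ∀ (As Bs Cs Ds : Finset A) (i1 i2 i3 i4 : ℕ),
    Disjoint As Bs → Disjoint As Cs → Disjoint As Ds →
    Disjoint Bs Cs → Disjoint Bs Ds → Disjoint Cs Ds →
    i1 ≤ i2 → i2 ≤ π.l → π.l ≤ i3 → i3 ≤ i4 → i4 ≤ π.size →
    π.seg 1 i1 = As.val + Bs.val →
    π.seg (i2 + 1) π.l = Ds.val + Bs.val →
    π.seg (π.l + 1) i3 = As.val + Cs.val →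
    π.seg (i4 + 1) π.size = Ds.val + Cs.val →
    (π.seg 1 i1 = 0 ∧ π.seg (i2 + 1) π.l = 0 ∧ π.seg (π.l + 1) i3 = 0 ∧
      π.seg (i4 + 1) π.size = 0)

/-- `Σ_{j=1}^{k} ζ_{π(j)}` (partial sum along the top line). -/
noncomputable def topSum (π : GenPerm A) (ζ : A → ℂ) (k : ℕ) : ℂ := ∑ j ∈ Finset.Icc 1 k, ζ (π.p j)

/-- `Σ_{j=1}^{k} ζ_{π(l+j)}` (partial sum along the bottom line). -/
noncomputable def botSum (π : GenPerm A) (ζ : A → ℂ) (k : ℕ) : ℂ := ∑ j ∈ Finset.Icc 1 k, ζ (π.p (π.l + j))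

/-- Real version of `topSum`. -/
noncomputable def topSumR (π : GenPerm A) (τ : A → ℝ) (k : ℕ) : ℝ := ∑ j ∈ Finset.Icc 1 k, τ (π.p j)

/-- Real version of `botSum`. -/
noncomputable def botSumR (π : GenPerm A) (τ : A → ℝ) (k : ℕ) : ℝ := ∑ j ∈ Finset.Icc 1 k, τ (π.p (π.l + j))

/-- `ζ` is a suspension data for `π`. -/
def IsSuspension (π : GenPerm A) (ζ : A → ℂ) : Prop :=
  (∀ a, 0 < (ζ a).re) ∧
  (∀ i, 1 ≤ i → i ≤ π.l - 1 → 0 < (π.topSum ζ i).im) ∧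
  (∀ i, 1 ≤ i → i ≤ π.m - 1 → (π.botSum ζ i).im < 0) ∧
  π.topSum ζ π.l = π.botSum ζ π.m

/-- `τ` is a pseudo-suspension for `π`. -/
def IsPseudoSusp (π : GenPerm A) (τ : A → ℝ) : Prop :=
  (∀ k, 1 ≤ k → k ≤ π.l → 0 ≤ π.topSumR τ k) ∧
  (∀ k, 1 ≤ k → k ≤ π.m → π.botSumR τ k ≤ 0) ∧
  π.topSumR τ π.l = 0 ∧ π.botSumR τ π.m = 0

/-- `τ` is a strict pseudo-suspension for `π`: all the inequalities are strict except the
extremal ones. -/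
def IsStrictPseudoSusp (π : GenPerm A) (τ : A → ℝ) : Prop :=
  π.IsPseudoSusp τ ∧
  (∀ k, 1 ≤ k → k ≤ π.l - 1 → 0 < π.topSumR τ k) ∧
  (∀ k, 1 ≤ k → k ≤ π.m - 1 → π.botSumR τ k < 0)

/-- Number of occurrences of the letter `a` on the top line; so `a ∈ 𝒜₀ ↔ topCount = 2`,
`a ∈ 𝒜₁ ↔ topCount = 0`, and `a ∈ 𝒜₀₁ ↔ topCount = 1`. -/
def topCount (π : GenPerm A) (a : A) : ℕ :=
  ((Finset.Icc 1 π.l).filter (fun i => π.p i = a)).card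

end GenPerm

section Basics

open Multiset in
lemma mylemmas_test : True := trivial

namespace GenPerm

variable {A : Type*} [DecidableEq A] (π : GenPerm A)

lemma two_le_l (hconv : π.Convention) : 2 ≤ π.l := by
  obtain ⟨⟨i, j, ⟨hi1, _, hj1, _, hij, _⟩, hil, hjl⟩, _⟩ := hconv
  rcases Nat.lt_or_ge i j with h | h
  · omega
  · omega

lemma two_le_m (hconv : π.Convention) : 2 ≤ π.m := by
  obtain ⟨_, ⟨i, j, ⟨hi1, hi2, hj1, hj2, hij, _⟩, hil, hjl⟩⟩ := hconv
  simp only [size] at hi2 hj2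
  omega

lemma seg_map_sum (τ : A → ℝ) (a b : ℕ) :
    ((π.seg a b).map τ).sum = ∑ i ∈ Finset.Icc a b, τ (π.p i) := by
  rw [seg, Multiset.map_map]
  rfl

lemma topSumR_eq_seg (τ : A → ℝ) (k : ℕ) :
    π.topSumR τ k = ((π.seg 1 k).map τ).sum := by
  rw [seg_map_sum, topSumR]

lemma topSumR_split (τ : A → ℝ) {k : ℕ} (hk : k ≤ π.l) :
    π.topSumR τ π.l = π.topSumR τ k + ((π.seg (k + 1) π.l).map τ).sum := by
  rw [topSumR, topSumR, seg_map_sum]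
  rw [show Finset.Icc 1 π.l = Finset.Ioc 0 π.l from by rw [← Finset.Icc_add_one_left_eq_Ioc]; rfl,
    show Finset.Icc 1 k = Finset.Ioc 0 k from by rw [← Finset.Icc_add_one_left_eq_Ioc]; rfl,
    show Finset.Icc (k+1) π.l = Finset.Ioc k π.l from by rw [← Finset.Icc_add_one_left_eq_Ioc]]
  rw [← Finset.sum_Ioc_consecutive _ (Nat.zero_le k) hk]

lemma seg_bot_eq (k : ℕ) :
    π.seg (π.l + 1) (π.l + k) = (Finset.Icc 1 k).val.map (fun j => π.p (π.l + j)) := by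
  rw [seg, ← Finset.map_add_left_Icc 1 k π.l]
  simp [Finset.map_val, Multiset.map_map, Function.comp_def, addLeftEmbedding]

lemma botSumR_eq_seg (τ : A → ℝ) (k : ℕ) :
    π.botSumR τ k = ((π.seg (π.l + 1) (π.l + k)).map τ).sum := by
  rw [seg_bot_eq, Multiset.map_map, botSumR]
  rfl

lemma seg_bot_eq' (a k : ℕ) (ha : 1 ≤ a) :
    π.seg (π.l + a) (π.l + k) = (Finset.Icc a k).val.map (fun j => π.p (π.l + j)) := by
  rw [seg, ← Finset.map_add_left_Icc a k π.l]
  simp [Finset.map_val, Multiset.map_map, Function.comp_def, addLeftEmbedding]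

lemma botSumR_split (τ : A → ℝ) {k : ℕ} (hk : k ≤ π.m) :
    π.botSumR τ π.m = π.botSumR τ k + ((π.seg (π.l + k + 1) (π.l + π.m)).map τ).sum := by
  rw [show π.l + k + 1 = π.l + (k+1) from by ring, seg_bot_eq' π (k+1) π.m (by omega),
    Multiset.map_map, botSumR, botSumR]
  rw [show ((Finset.Icc (k+1) π.m).val.map (τ ∘ fun j => π.p (π.l + j))).sum
      = ∑ j ∈ Finset.Icc (k+1) π.m, τ (π.p (π.l + j)) from rfl]
  rw [show Finset.Icc 1 π.m = Finset.Ioc 0 π.m from by rw [← Finset.Icc_add_one_left_eq_Ioc]; rfl,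
    show Finset.Icc 1 k = Finset.Ioc 0 k from by rw [← Finset.Icc_add_one_left_eq_Ioc]; rfl,
    show Finset.Icc (k+1) π.m = Finset.Ioc k π.m from by rw [← Finset.Icc_add_one_left_eq_Ioc]]
  rw [← Finset.sum_Ioc_consecutive _ (Nat.zero_le k) hk]

end GenPerm
end Basics
namespace GenPerm

variable {A : Type*} [DecidableEq A] (π : GenPerm A)

lemma seg_eq_zero_iff {a b : ℕ} : π.seg a b = 0 ↔ ¬ a ≤ b := by
  rw [seg, Multiset.map_eq_zero, Finset.val_eq_zero, Finset.Icc_eq_empty_iff]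

lemma nodup_disjUnion_val {X Y : Finset A} (hXY : Disjoint X Y) : (X.val + Y.val).Nodup := by
  rw [Multiset.nodup_add]
  exact ⟨X.nodup, Y.nodup, Finset.disjoint_val.mpr hXY⟩

lemma seg_nodup_inj {a b : ℕ} (hnd : (π.seg a b).Nodup) :
    ∀ i ∈ Finset.Icc a b, ∀ j ∈ Finset.Icc a b, π.p i = π.p j → i = j := by
  intro i hi j hj hij
  exact Multiset.inj_on_of_nodup_map hnd i hi j hj hij

lemma top_not_nodup (hconv : π.Convention) : ¬ (π.seg 1 π.l).Nodup := by
  obtain ⟨⟨i, j, ⟨hi1, _, hj1, _, hij, hpij⟩, hil, hjl⟩, _⟩ := hconv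
  intro hnd
  exact hij (π.seg_nodup_inj hnd i (Finset.mem_Icc.mpr ⟨hi1, hil⟩)
    j (Finset.mem_Icc.mpr ⟨hj1, hjl⟩) hpij)

lemma bot_not_nodup (hconv : π.Convention) : ¬ (π.seg (π.l + 1) π.size).Nodup := by
  obtain ⟨_, ⟨i, j, ⟨_, hi2, _, hj2, hij, hpij⟩, hil, hjl⟩⟩ := hconv
  intro hnd
  exact hij (π.seg_nodup_inj hnd i (Finset.mem_Icc.mpr ⟨by omega, hi2⟩)
    j (Finset.mem_Icc.mpr ⟨by omega, hj2⟩) hpij)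

lemma finset_sum_eq_val_map (X : Finset A) (h : A → ℝ) :
    ∑ a ∈ X, h a = (X.val.map h).sum := rfl

theorem irreducible_of_suspension (hconv : π.Convention) (ζ : A → ℂ)
    (hs : π.IsSuspension ζ) : π.Irreducible := by
  classical
  rintro ⟨As, Bs, Cs, Ds, i1, i2, i3, i4, dAB, dAC, dAD, dBC, dBD, dCD, hne, h12, h2l, hl3,
    h34, h4s, e1, e2, e3, e4, hcases⟩
  obtain ⟨hre, him_top, him_bot, htot⟩ := hs
  set h : A → ℝ := fun a => (ζ a).im with hh
  have htopim : ∀ k, (π.topSum ζ k).im = π.topSumR h k := by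
    intro k; rw [topSum, topSumR, Complex.im_sum]
  have hbotim : ∀ k, (π.botSum ζ k).im = π.botSumR h k := by
    intro k; rw [botSum, botSumR, Complex.im_sum]
  have hft : ∀ k, 1 ≤ k → k ≤ π.l - 1 → 0 < π.topSumR h k := by
    intro k h1 h2; rw [← htopim]; exact him_top k h1 h2
  have hgb : ∀ k, 1 ≤ k → k ≤ π.m - 1 → π.botSumR h k < 0 := by
    intro k h1 h2; rw [← hbotim]; exact him_bot k h1 h2
  have heq : π.topSumR h π.l = π.botSumR h π.m := by
    rw [← htopim, ← hbotim, htot]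
  have ft0 : π.topSumR h 0 = 0 := by simp [topSumR]
  have gb0 : π.botSumR h 0 = 0 := by simp [botSumR]
  have hl2 := π.two_le_l hconv
  have hm2 := π.two_le_m hconv
  have hsize : π.size = π.l + π.m := rfl
  -- corner sum identities
  have sAB : π.topSumR h i1 = (∑ a ∈ As, h a) + ∑ a ∈ Bs, h a := by
    rw [topSumR_eq_seg, e1, Multiset.map_add, Multiset.sum_add,
      finset_sum_eq_val_map, finset_sum_eq_val_map]
  have sDB : π.topSumR h π.l = π.topSumR h i2 + ((∑ a ∈ Ds, h a) + ∑ a ∈ Bs, h a) := by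
    rw [π.topSumR_split h h2l, e2, Multiset.map_add, Multiset.sum_add,
      finset_sum_eq_val_map, finset_sum_eq_val_map]
  have sAC : π.botSumR h (i3 - π.l) = (∑ a ∈ As, h a) + ∑ a ∈ Cs, h a := by
    rw [botSumR_eq_seg, show π.l + (i3 - π.l) = i3 from by omega, e3, Multiset.map_add,
      Multiset.sum_add, finset_sum_eq_val_map, finset_sum_eq_val_map]
  have sDC : π.botSumR h π.m
      = π.botSumR h (i4 - π.l) + ((∑ a ∈ Ds, h a) + ∑ a ∈ Cs, h a) := by
    have h4m : i4 - π.l ≤ π.m := by omega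
    rw [π.botSumR_split h h4m, show π.l + (i4 - π.l) + 1 = i4 + 1 from by omega,
      show π.l + π.m = π.size from rfl, e4, Multiset.map_add,
      Multiset.sum_add, finset_sum_eq_val_map, finset_sum_eq_val_map]
  -- the key identity
  have key : π.topSumR h i1 - π.botSumR h (i3 - π.l)
      = π.botSumR h (i4 - π.l) - π.topSumR h i2 := by linarith
  -- emptiness characterizations
  have hTL0 : π.seg 1 i1 = 0 ↔ i1 = 0 := by rw [seg_eq_zero_iff]; omega
  have hTR0 : π.seg (i2 + 1) π.l = 0 ↔ i2 = π.l := by rw [seg_eq_zero_iff]; omega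
  have hBL0 : π.seg (π.l + 1) i3 = 0 ↔ i3 = π.l := by rw [seg_eq_zero_iff]; omega
  have hBR0 : π.seg (i4 + 1) π.size = 0 ↔ i4 = π.size := by rw [seg_eq_zero_iff]; omega
  have main : π.seg (i2 + 1) π.l ≠ 0 → π.seg (i4 + 1) π.size ≠ 0 → False := by
    intro hTR hBR
    have hi2l : i2 ≠ π.l := fun hc => hTR (hTR0.mpr hc)
    have hi4s : i4 ≠ π.size := fun hc => hBR (hBR0.mpr hc)
    have hi2pos : 1 ≤ i2 := by
      by_contra hc
      have hi20 : i2 = 0 := by omega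
      have hseg : π.seg 1 π.l = Ds.val + Bs.val := by rw [← e2, hi20]
      exact π.top_not_nodup hconv (by rw [hseg]; exact nodup_disjUnion_val dBD.symm)
    have hft2 : 0 < π.topSumR h i2 := hft i2 hi2pos (by omega)
    have hi4pos : π.l + 1 ≤ i4 := by
      by_contra hc
      have hi4l : i4 = π.l := by omega
      have hseg : π.seg (π.l + 1) π.size = Ds.val + Cs.val := by rw [← e4, hi4l]
      exact π.bot_not_nodup hconv (by rw [hseg]; exact nodup_disjUnion_val dCD.symm)
    have hgb4 : π.botSumR h (i4 - π.l) < 0 := hgb _ (by omega) (by omega)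
    have hft1 : 0 ≤ π.topSumR h i1 := by
      rcases Nat.eq_zero_or_pos i1 with hc | hc
      · rw [hc, ft0]
      · exact le_of_lt (hft i1 hc (by omega))
    have hgb3 : π.botSumR h (i3 - π.l) ≤ 0 := by
      rcases Nat.eq_zero_or_pos (i3 - π.l) with hc | hc
      · rw [hc, gb0]
      · exact le_of_lt (hgb _ hc (by omega))
    linarith
  rcases hcases with ⟨_, hTR, _, hBR⟩ | ⟨_, hTR, _, hBR⟩ | ⟨_, hTR, _, hBR⟩ |
    ⟨_, hTR, _, hBR⟩ | ⟨hTL, hTR, hBL, hBR⟩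
  · exact main hTR hBR
  · exact main hTR hBR
  · exact main hTR hBR
  · exact main hTR hBR
  · -- case 5
    have hi2l : i2 = π.l := hTR0.mp hTR
    have hi4s : i4 = π.size := hBR0.mp hBR
    have hi1pos : 1 ≤ i1 := by
      by_contra hc
      exact hTL (hTL0.mpr (by omega))
    have hi1l : i1 ≠ π.l := by
      intro hc
      have hseg : π.seg 1 π.l = As.val + Bs.val := by rw [← e1, hc]
      exact π.top_not_nodup hconv (by rw [hseg]; exact nodup_disjUnion_val dAB)
    have hft1 : 0 < π.topSumR h i1 := hft i1 hi1pos (by omega)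
    have hi3pos : i3 ≠ π.l := fun hc => hBL (hBL0.mpr hc)
    have hi3s : i3 ≠ π.size := by
      intro hc
      have hseg : π.seg (π.l + 1) π.size = As.val + Cs.val := by rw [← e3, hc]
      exact π.bot_not_nodup hconv (by rw [hseg]; exact nodup_disjUnion_val dAC)
    have hgb3 : π.botSumR h (i3 - π.l) < 0 := hgb _ (by omega) (by omega)
    have hfl : π.topSumR h i2 = π.topSumR h π.l := by rw [hi2l]
    have hbm : π.botSumR h (i4 - π.l) = π.botSumR h π.m := by
      rw [hi4s, hsize, Nat.add_sub_cancel_left]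
    linarith
end GenPerm
lemma downset_eq_Icc {S : Finset ℕ} {l : ℕ} (hS : S ⊆ Finset.Icc 1 l)
    (hdown : ∀ t t', 1 ≤ t → t ≤ t' → t' ∈ S → t ∈ S) : S = Finset.Icc 1 S.card := by
  apply Finset.Subset.antisymm
  · intro t ht
    have h1 : 1 ≤ t ∧ t ≤ l := Finset.mem_Icc.mp (hS ht)
    have hsub : Finset.Icc 1 t ⊆ S := by
      intro x hx
      have := Finset.mem_Icc.mp hx
      exact hdown x t this.1 this.2 ht
    have : t ≤ S.card := by
      calc t = (Finset.Icc 1 t).card := by rw [Nat.card_Icc]; omega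
      _ ≤ S.card := Finset.card_le_card hsub
    exact Finset.mem_Icc.mpr ⟨h1.1, this⟩
  · intro t ht
    have h1 := Finset.mem_Icc.mp ht
    have hScard : 0 < S.card := by omega
    have hSne : S.Nonempty := Finset.card_pos.mp hScard
    set M := S.max' hSne with hM
    have hMS : M ∈ S := S.max'_mem hSne
    have hsub : Finset.Icc 1 M ⊆ S := by
      intro x hx
      have := Finset.mem_Icc.mp hx
      exact hdown x M this.1 this.2 hMS
    have hSM : S ⊆ Finset.Icc 1 M := by
      intro x hx
      have := Finset.mem_Icc.mp (hS hx)
      exact Finset.mem_Icc.mpr ⟨this.1, S.le_max' x hx⟩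
    have hcard : S.card ≤ M := by
      calc S.card ≤ (Finset.Icc 1 M).card := Finset.card_le_card hSM
      _ = M := by rw [Nat.card_Icc]; omega
    exact hsub (Finset.mem_Icc.mpr ⟨h1.1, le_trans h1.2 hcard⟩)

namespace GenPerm

variable {A : Type*} [DecidableEq A] (π : GenPerm A)

/-- Positions of the letter `a` on the top line. -/
def Tocc (a : A) : Finset ℕ := (Finset.Icc 1 π.l).filter (fun t => π.p t = a)

/-- Positions (in relative coordinates) of the letter `a` on the bottom line. -/
def Socc (a : A) : Finset ℕ := (Finset.Icc 1 π.m).filter (fun s => π.p (π.l + s) = a)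

lemma card_occ (a : A) : (π.Tocc a).card + (π.Socc a).card = 2 := by
  classical
  have hsplit : Finset.Icc 1 (π.l + π.m)
      = Finset.Icc 1 π.l ∪ Finset.Icc (π.l + 1) (π.l + π.m) := by
    ext x; simp only [Finset.mem_Icc, Finset.mem_union]; omega
  have hdisj : Disjoint (Finset.Icc 1 π.l) (Finset.Icc (π.l + 1) (π.l + π.m)) := by
    rw [Finset.disjoint_left]
    intro x hx hx'
    have := Finset.mem_Icc.mp hx
    have := Finset.mem_Icc.mp hx'
    omega
  have h2 := π.double a
  rw [hsplit, Finset.filter_union, Finset.card_union_of_disjoint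
    (Finset.disjoint_filter_filter hdisj)] at h2
  rw [← h2, Tocc, Socc]
  congr 1
  have hmap : Finset.Icc (π.l + 1) (π.l + π.m)
      = (Finset.Icc 1 π.m).map (addLeftEmbedding π.l) := by
    rw [Finset.map_add_left_Icc]
  rw [hmap, Finset.filter_map, Finset.card_map]
  rfl

lemma mem_Tocc {a : A} {t : ℕ} : t ∈ π.Tocc a ↔ (1 ≤ t ∧ t ≤ π.l) ∧ π.p t = a := by
  rw [Tocc, Finset.mem_filter, Finset.mem_Icc]

lemma mem_Socc {a : A} {s : ℕ} : s ∈ π.Socc a ↔ (1 ≤ s ∧ s ≤ π.m) ∧ π.p (π.l + s) = a := by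
  rw [Socc, Finset.mem_filter, Finset.mem_Icc]

lemma card_Tocc_le (a : A) : (π.Tocc a).card ≤ 2 := by have := π.card_occ a; omega

lemma Tocc_eq_pair {a : A} {t t' : ℕ} (h : t ≠ t') (ht : t ∈ π.Tocc a) (ht' : t' ∈ π.Tocc a) :
    π.Tocc a = {t, t'} ∧ π.Socc a = ∅ := by
  have hsub : ({t, t'} : Finset ℕ) ⊆ π.Tocc a := by
    intro x hx
    rcases Finset.mem_insert.mp hx with rfl | hx
    · exact ht
    · rwa [Finset.mem_singleton.mp hx]
  have hcard2 : ({t, t'} : Finset ℕ).card = 2 := Finset.card_pair h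
  have heq : π.Tocc a = {t, t'} :=
    (Finset.eq_of_subset_of_card_le hsub (by rw [hcard2]; exact π.card_Tocc_le a)).symm
  have : (π.Socc a).card = 0 := by
    have := π.card_occ a
    rw [heq, hcard2] at this
    omega
  exact ⟨heq, Finset.card_eq_zero.mp this⟩

lemma Socc_eq_pair {a : A} {s s' : ℕ} (h : s ≠ s') (hs : s ∈ π.Socc a) (hs' : s' ∈ π.Socc a) :
    π.Socc a = {s, s'} ∧ π.Tocc a = ∅ := by
  have hsub : ({s, s'} : Finset ℕ) ⊆ π.Socc a := by
    intro x hx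
    rcases Finset.mem_insert.mp hx with rfl | hx
    · exact hs
    · rwa [Finset.mem_singleton.mp hx]
  have hcard2 : ({s, s'} : Finset ℕ).card = 2 := Finset.card_pair h
  have hle : (π.Socc a).card ≤ 2 := by have := π.card_occ a; omega
  have heq : π.Socc a = {s, s'} :=
    (Finset.eq_of_subset_of_card_le hsub (by rw [hcard2]; exact hle)).symm
  have : (π.Tocc a).card = 0 := by
    have := π.card_occ a
    rw [heq, hcard2] at this
    omega
  exact ⟨heq, Finset.card_eq_zero.mp this⟩

lemma exists_top_twin (hconv : π.Convention) :
    ∃ a t t', t ≠ t' ∧ π.Tocc a = {t, t'} ∧ π.Socc a = ∅ := by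
  obtain ⟨⟨i, j, ⟨hi1, _, hj1, _, hij, hpij⟩, hil, hjl⟩, _⟩ := hconv
  refine ⟨π.p i, i, j, hij, π.Tocc_eq_pair hij ?_ ?_⟩
  · exact π.mem_Tocc.mpr ⟨⟨hi1, hil⟩, rfl⟩
  · exact π.mem_Tocc.mpr ⟨⟨hj1, hjl⟩, hpij.symm⟩

lemma exists_bot_twin (hconv : π.Convention) :
    ∃ a s s', s ≠ s' ∧ π.Socc a = {s, s'} ∧ π.Tocc a = ∅ := by
  obtain ⟨_, ⟨i, j, ⟨_, hi2, _, hj2, hij, hpij⟩, hil, hjl⟩⟩ := hconv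
  have hsz : π.size = π.l + π.m := rfl
  refine ⟨π.p i, i - π.l, j - π.l, by omega, π.Socc_eq_pair (by omega) ?_ ?_⟩
  · exact π.mem_Socc.mpr ⟨⟨by omega, by omega⟩, by rw [show π.l + (i - π.l) = i from by omega]⟩
  · exact π.mem_Socc.mpr ⟨⟨by omega, by omega⟩,
      by rw [show π.l + (j - π.l) = j from by omega]; exact hpij.symm⟩

end GenPerm
namespace GenPerm

variable {A : Type*} [DecidableEq A] (π : GenPerm A)

/-- The "weight" of a top position coming from a dual certificate. -/
noncomputable def Atop (α : ℕ → ℝ) (γ₀ : ℝ) (t : ℕ) : ℝ :=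
  (∑ n ∈ Finset.Icc t (π.l - 1), α n) + γ₀

/-- The "weight" of a bottom position coming from a dual certificate. -/
noncomputable def Bbot (β : ℕ → ℝ) (γ₀ : ℝ) (s : ℕ) : ℝ :=
  (∑ n ∈ Finset.Icc s (π.m - 1), β n) + γ₀

theorem reducible_of_certificate [Fintype A] (hconv : π.Convention)
    (α β : ℕ → ℝ) (hα : ∀ n, 0 ≤ α n) (hβ : ∀ n, 0 ≤ β n) (γ₀ : ℝ)
    (hnontriv : (∑ n ∈ Finset.Icc 1 (π.l - 1), α n) + (∑ n ∈ Finset.Icc 1 (π.m - 1), β n) = 1)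
    (hletter : ∀ a : A,
      (∑ t ∈ π.Tocc a, π.Atop α γ₀ t) = ∑ s ∈ π.Socc a, π.Bbot β γ₀ s) :
    π.Reducible := by
  classical
  have hl2 := π.two_le_l hconv
  have hm2 := π.two_le_m hconv
  have hsize : π.size = π.l + π.m := rfl
  -- basic properties of the weights
  have hAmono : ∀ t t', t ≤ t' → π.Atop α γ₀ t' ≤ π.Atop α γ₀ t := by
    intro t t' htt
    unfold Atop
    have : ∑ n ∈ Finset.Icc t' (π.l - 1), α n ≤ ∑ n ∈ Finset.Icc t (π.l - 1), α n :=
      Finset.sum_le_sum_of_subset_of_nonneg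
        (Finset.Icc_subset_Icc_left htt) (fun n _ _ => hα n)
    linarith
  have hBmono : ∀ s s', s ≤ s' → π.Bbot β γ₀ s' ≤ π.Bbot β γ₀ s := by
    intro s s' hss
    unfold Bbot
    have : ∑ n ∈ Finset.Icc s' (π.m - 1), β n ≤ ∑ n ∈ Finset.Icc s (π.m - 1), β n :=
      Finset.sum_le_sum_of_subset_of_nonneg
        (Finset.Icc_subset_Icc_left hss) (fun n _ _ => hβ n)
    linarith
  have hAge : ∀ t, γ₀ ≤ π.Atop α γ₀ t := by
    intro t
    unfold Atop
    have : (0:ℝ) ≤ ∑ n ∈ Finset.Icc t (π.l - 1), α n :=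
      Finset.sum_nonneg (fun n _ => hα n)
    linarith
  have hBge : ∀ s, γ₀ ≤ π.Bbot β γ₀ s := by
    intro s
    unfold Bbot
    have : (0:ℝ) ≤ ∑ n ∈ Finset.Icc s (π.m - 1), β n :=
      Finset.sum_nonneg (fun n _ => hβ n)
    linarith
  have hAl : π.Atop α γ₀ π.l = γ₀ := by
    unfold Atop
    rw [Finset.Icc_eq_empty (by omega), Finset.sum_empty, zero_add]
  have hBm : π.Bbot β γ₀ π.m = γ₀ := by
    unfold Bbot
    rw [Finset.Icc_eq_empty (by omega), Finset.sum_empty, zero_add]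
  -- pair identities
  have hpairT : ∀ (a : A) t t', t ≠ t' → t ∈ π.Tocc a → t' ∈ π.Tocc a →
      π.Atop α γ₀ t + π.Atop α γ₀ t' = 0 := by
    intro a t t' hne ht ht'
    obtain ⟨hT, hS⟩ := π.Tocc_eq_pair hne ht ht'
    have h := hletter a
    rwa [hT, hS, Finset.sum_pair hne, Finset.sum_empty] at h
  have hpairS : ∀ (a : A) s s', s ≠ s' → s ∈ π.Socc a → s' ∈ π.Socc a →
      π.Bbot β γ₀ s + π.Bbot β γ₀ s' = 0 := by
    intro a s s' hne hs hs'
    obtain ⟨hS, hT⟩ := π.Socc_eq_pair hne hs hs'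
    have h := hletter a
    rw [hT, hS, Finset.sum_pair hne, Finset.sum_empty] at h
    linarith
  have hone : ∀ a : A, (π.Tocc a).card = 1 → ∃ t s, π.Tocc a = {t} ∧ π.Socc a = {s} ∧
      π.Atop α γ₀ t = π.Bbot β γ₀ s := by
    intro a hc
    have hcS : (π.Socc a).card = 1 := by have := π.card_occ a; omega
    obtain ⟨t, hT⟩ := Finset.card_eq_one.mp hc
    obtain ⟨s, hS⟩ := Finset.card_eq_one.mp hcS
    refine ⟨t, s, hT, hS, ?_⟩
    have h := hletter a
    rwa [hT, hS, Finset.sum_singleton, Finset.sum_singleton] at h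
  have hcard12T : ∀ (a : A) t, t ∈ π.Tocc a → (π.Tocc a).card = 1 ∨ (π.Tocc a).card = 2 := by
    intro a t ht
    have h1 : 0 < (π.Tocc a).card := Finset.card_pos.mpr ⟨t, ht⟩
    have h2 := π.card_occ a
    omega
  have hcard12S : ∀ (a : A) s, s ∈ π.Socc a → (π.Socc a).card = 1 ∨ (π.Socc a).card = 2 := by
    intro a s hs
    have h1 : 0 < (π.Socc a).card := Finset.card_pos.mpr ⟨s, hs⟩
    have h2 := π.card_occ a
    omega
  -- γ₀ ≤ 0
  have hγ0 : γ₀ ≤ 0 := by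
    obtain ⟨a, t, t', hne, hT, hS⟩ := π.exists_top_twin hconv
    have h := hpairT a t t' hne (by rw [hT]; exact Finset.mem_insert_self _ _)
      (by rw [hT]; exact Finset.mem_insert_of_mem (Finset.mem_singleton_self _))
    have := hAge t
    have := hAge t'
    linarith
  -- level-set indices
  set i1 : ℕ := ((Finset.Icc 1 π.l).filter (fun t => 0 < π.Atop α γ₀ t)).card with hi1
  set i2 : ℕ := ((Finset.Icc 1 π.l).filter (fun t => 0 ≤ π.Atop α γ₀ t)).card with hi2
  set j3 : ℕ := ((Finset.Icc 1 π.m).filter (fun s => 0 < π.Bbot β γ₀ s)).card with hj3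
  set j4 : ℕ := ((Finset.Icc 1 π.m).filter (fun s => 0 ≤ π.Bbot β γ₀ s)).card with hj4
  have hTLf : (Finset.Icc 1 π.l).filter (fun t => 0 < π.Atop α γ₀ t) = Finset.Icc 1 i1 :=
    downset_eq_Icc (Finset.filter_subset _ _) (by
      intro t t' h1 htt' hmem
      rw [Finset.mem_filter, Finset.mem_Icc] at hmem ⊢
      exact ⟨⟨h1, le_trans htt' hmem.1.2⟩, lt_of_lt_of_le hmem.2 (hAmono t t' htt')⟩)
  have hTNf : (Finset.Icc 1 π.l).filter (fun t => 0 ≤ π.Atop α γ₀ t) = Finset.Icc 1 i2 :=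
    downset_eq_Icc (Finset.filter_subset _ _) (by
      intro t t' h1 htt' hmem
      rw [Finset.mem_filter, Finset.mem_Icc] at hmem ⊢
      exact ⟨⟨h1, le_trans htt' hmem.1.2⟩, le_trans hmem.2 (hAmono t t' htt')⟩)
  have hBLf : (Finset.Icc 1 π.m).filter (fun s => 0 < π.Bbot β γ₀ s) = Finset.Icc 1 j3 :=
    downset_eq_Icc (Finset.filter_subset _ _) (by
      intro s s' h1 hss' hmem
      rw [Finset.mem_filter, Finset.mem_Icc] at hmem ⊢
      exact ⟨⟨h1, le_trans hss' hmem.1.2⟩, lt_of_lt_of_le hmem.2 (hBmono s s' hss')⟩)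
  have hBNf : (Finset.Icc 1 π.m).filter (fun s => 0 ≤ π.Bbot β γ₀ s) = Finset.Icc 1 j4 :=
    downset_eq_Icc (Finset.filter_subset _ _) (by
      intro s s' h1 hss' hmem
      rw [Finset.mem_filter, Finset.mem_Icc] at hmem ⊢
      exact ⟨⟨h1, le_trans hss' hmem.1.2⟩, le_trans hmem.2 (hBmono s s' hss')⟩)
  have memTL : ∀ t, t ∈ Finset.Icc 1 i1 ↔ ((1 ≤ t ∧ t ≤ π.l) ∧ 0 < π.Atop α γ₀ t) := by
    intro t; rw [← hTLf, Finset.mem_filter, Finset.mem_Icc]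
  have memBL : ∀ s, s ∈ Finset.Icc 1 j3 ↔ ((1 ≤ s ∧ s ≤ π.m) ∧ 0 < π.Bbot β γ₀ s) := by
    intro s; rw [← hBLf, Finset.mem_filter, Finset.mem_Icc]
  have memTN : ∀ t, t ∈ Finset.Icc 1 i2 ↔ ((1 ≤ t ∧ t ≤ π.l) ∧ 0 ≤ π.Atop α γ₀ t) := by
    intro t; rw [← hTNf, Finset.mem_filter, Finset.mem_Icc]
  have memBN : ∀ s, s ∈ Finset.Icc 1 j4 ↔ ((1 ≤ s ∧ s ≤ π.m) ∧ 0 ≤ π.Bbot β γ₀ s) := by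
    intro s; rw [← hBNf, Finset.mem_filter, Finset.mem_Icc]
  have memTR : ∀ t, t ∈ Finset.Icc (i2 + 1) π.l ↔ ((1 ≤ t ∧ t ≤ π.l) ∧ π.Atop α γ₀ t < 0) := by
    intro t
    rw [Finset.mem_Icc]
    constructor
    · rintro ⟨h1, h2⟩
      refine ⟨⟨by omega, h2⟩, ?_⟩
      by_contra hc
      push_neg at hc
      have := (memTN t).mpr ⟨⟨by omega, h2⟩, hc⟩
      rw [Finset.mem_Icc] at this
      omega
    · rintro ⟨⟨h1, h2⟩, hneg⟩
      have : t ∉ Finset.Icc 1 i2 := by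
        intro hc
        have := ((memTN t).mp hc).2
        linarith
      rw [Finset.mem_Icc] at this
      omega
  have memBR : ∀ s, s ∈ Finset.Icc (j4 + 1) π.m ↔ ((1 ≤ s ∧ s ≤ π.m) ∧ π.Bbot β γ₀ s < 0) := by
    intro s
    rw [Finset.mem_Icc]
    constructor
    · rintro ⟨h1, h2⟩
      refine ⟨⟨by omega, h2⟩, ?_⟩
      by_contra hc
      push_neg at hc
      have := (memBN s).mpr ⟨⟨by omega, h2⟩, hc⟩
      rw [Finset.mem_Icc] at this
      omega
    · rintro ⟨⟨h1, h2⟩, hneg⟩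
      have : s ∉ Finset.Icc 1 j4 := by
        intro hc
        have := ((memBN s).mp hc).2
        linarith
      rw [Finset.mem_Icc] at this
      omega
  have hi12 : i1 ≤ i2 :=
    Finset.card_le_card (Finset.monotone_filter_right _ (fun x _ h => le_of_lt h))
  have hi2l : i2 ≤ π.l := by
    have := Finset.card_filter_le (Finset.Icc 1 π.l) (fun t => 0 ≤ π.Atop α γ₀ t)
    rwa [Nat.card_Icc, Nat.add_sub_cancel] at this
  have hj34 : j3 ≤ j4 :=
    Finset.card_le_card (Finset.monotone_filter_right _ (fun x _ h => le_of_lt h))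
  have hj4m : j4 ≤ π.m := by
    have := Finset.card_filter_le (Finset.Icc 1 π.m) (fun s => 0 ≤ π.Bbot β γ₀ s)
    rwa [Nat.card_Icc, Nat.add_sub_cancel] at this

  -- the letter sets
  set As : Finset A := Finset.univ.filter
    (fun a => (π.Tocc a).card = 1 ∧ ∃ t ∈ π.Tocc a, 0 < π.Atop α γ₀ t) with hAs
  set Ds : Finset A := Finset.univ.filter
    (fun a => (π.Tocc a).card = 1 ∧ ∃ t ∈ π.Tocc a, π.Atop α γ₀ t < 0) with hDs
  set Bs : Finset A := Finset.univ.filter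
    (fun a => (π.Tocc a).card = 2 ∧ ∃ t ∈ π.Tocc a, π.Atop α γ₀ t ≠ 0) with hBs
  set Cs : Finset A := Finset.univ.filter
    (fun a => (π.Socc a).card = 2 ∧ ∃ s ∈ π.Socc a, π.Bbot β γ₀ s ≠ 0) with hCs
  have memAs : ∀ a, a ∈ As ↔ ((π.Tocc a).card = 1 ∧ ∃ t ∈ π.Tocc a, 0 < π.Atop α γ₀ t) := by
    intro a; rw [hAs, Finset.mem_filter]; simp
  have memDs : ∀ a, a ∈ Ds ↔ ((π.Tocc a).card = 1 ∧ ∃ t ∈ π.Tocc a, π.Atop α γ₀ t < 0) := by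
    intro a; rw [hDs, Finset.mem_filter]; simp
  have memBs : ∀ a, a ∈ Bs ↔ ((π.Tocc a).card = 2 ∧ ∃ t ∈ π.Tocc a, π.Atop α γ₀ t ≠ 0) := by
    intro a; rw [hBs, Finset.mem_filter]; simp
  have memCs : ∀ a, a ∈ Cs ↔ ((π.Socc a).card = 2 ∧ ∃ s ∈ π.Socc a, π.Bbot β γ₀ s ≠ 0) := by
    intro a; rw [hCs, Finset.mem_filter]; simp
  -- sign extraction for pair letters
  have hBsgn : ∀ a, (π.Tocc a).card = 2 → (∃ t ∈ π.Tocc a, π.Atop α γ₀ t ≠ 0) →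
      (∃ t ∈ π.Tocc a, 0 < π.Atop α γ₀ t) ∧ (∃ t ∈ π.Tocc a, π.Atop α γ₀ t < 0) := by
    rintro a hc2 ⟨t0, ht0, hne0⟩
    obtain ⟨t1, t2, hne, hT⟩ := Finset.card_eq_two.mp hc2
    have h1 : t1 ∈ π.Tocc a := by rw [hT]; exact Finset.mem_insert_self _ _
    have h2 : t2 ∈ π.Tocc a := by
      rw [hT]; exact Finset.mem_insert_of_mem (Finset.mem_singleton_self _)
    have hsum := hpairT a t1 t2 hne h1 h2
    have ht0' : t0 = t1 ∨ t0 = t2 := by rw [hT] at ht0; simpa using ht0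
    rcases lt_trichotomy (π.Atop α γ₀ t1) 0 with hlt | heq0 | hgt
    · exact ⟨⟨t2, h2, by linarith⟩, ⟨t1, h1, hlt⟩⟩
    · exfalso
      rcases ht0' with rfl | rfl
      · exact hne0 heq0
      · exact hne0 (by linarith)
    · exact ⟨⟨t1, h1, hgt⟩, ⟨t2, h2, by linarith⟩⟩
  have hCsgn : ∀ a, (π.Socc a).card = 2 → (∃ s ∈ π.Socc a, π.Bbot β γ₀ s ≠ 0) →
      (∃ s ∈ π.Socc a, 0 < π.Bbot β γ₀ s) ∧ (∃ s ∈ π.Socc a, π.Bbot β γ₀ s < 0) := by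
    rintro a hc2 ⟨s0, hs0, hne0⟩
    obtain ⟨s1, s2, hne, hS⟩ := Finset.card_eq_two.mp hc2
    have h1 : s1 ∈ π.Socc a := by rw [hS]; exact Finset.mem_insert_self _ _
    have h2 : s2 ∈ π.Socc a := by
      rw [hS]; exact Finset.mem_insert_of_mem (Finset.mem_singleton_self _)
    have hsum := hpairS a s1 s2 hne h1 h2
    have hs0' : s0 = s1 ∨ s0 = s2 := by rw [hS] at hs0; simpa using hs0
    rcases lt_trichotomy (π.Bbot β γ₀ s1) 0 with hlt | heq0 | hgt
    · exact ⟨⟨s2, h2, by linarith⟩, ⟨s1, h1, hlt⟩⟩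
    · exfalso
      rcases hs0' with rfl | rfl
      · exact hne0 heq0
      · exact hne0 (by linarith)
    · exact ⟨⟨s1, h1, hgt⟩, ⟨s2, h2, by linarith⟩⟩
  -- disjointness
  have dAB : Disjoint As Bs := Finset.disjoint_left.mpr (by
    intro a ha hb
    have h1 := ((memAs a).mp ha).1
    have h2 := ((memBs a).mp hb).1
    omega)
  have dAC : Disjoint As Cs := Finset.disjoint_left.mpr (by
    intro a ha hb
    have h1 := ((memAs a).mp ha).1
    have h2 := ((memCs a).mp hb).1
    have := π.card_occ a
    omega)
  have dAD : Disjoint As Ds := Finset.disjoint_left.mpr (by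
    intro a ha hb
    obtain ⟨hc1, t0, ht0, hpos⟩ := (memAs a).mp ha
    obtain ⟨-, t1, ht1, hneg⟩ := (memDs a).mp hb
    obtain ⟨u, hu⟩ := Finset.card_eq_one.mp hc1
    rw [hu, Finset.mem_singleton] at ht0 ht1
    subst ht0; subst ht1
    linarith)
  have dBC : Disjoint Bs Cs := Finset.disjoint_left.mpr (by
    intro a ha hb
    have h1 := ((memBs a).mp ha).1
    have h2 := ((memCs a).mp hb).1
    have := π.card_occ a
    omega)
  have dBD : Disjoint Bs Ds := Finset.disjoint_left.mpr (by
    intro a ha hb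
    have h1 := ((memBs a).mp ha).1
    have h2 := ((memDs a).mp hb).1
    omega)
  have dCD : Disjoint Cs Ds := Finset.disjoint_left.mpr (by
    intro a ha hb
    have h1 := ((memCs a).mp ha).1
    have h2 := ((memDs a).mp hb).1
    have := π.card_occ a
    omega)
  -- membership in segments
  have memseg_top : ∀ (x y : ℕ) (a : A),
      a ∈ π.seg x y ↔ ∃ t, t ∈ Finset.Icc x y ∧ π.p t = a := by
    intro x y a; simp [seg]
  have memseg_bot : ∀ (x k : ℕ), 1 ≤ x → ∀ a : A,
      (a ∈ π.seg (π.l + x) (π.l + k) ↔ ∃ s, s ∈ Finset.Icc x k ∧ π.p (π.l + s) = a) := by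
    intro x k hx a
    rw [π.seg_bot_eq' x k hx]
    simp
  -- Nodup of the four corners
  have hndTL : (π.seg 1 i1).Nodup := by
    rw [seg]
    refine Multiset.Nodup.map_on ?_ (Finset.Icc 1 i1).nodup
    intro t ht t' ht' hpe
    by_contra hne
    rw [Finset.mem_val] at ht ht'
    have h1 := (memTL t).mp ht
    have h2 := (memTL t').mp ht'
    have htT : t ∈ π.Tocc (π.p t) := π.mem_Tocc.mpr ⟨h1.1, rfl⟩
    have htT' : t' ∈ π.Tocc (π.p t) := π.mem_Tocc.mpr ⟨h2.1, hpe.symm⟩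
    have := hpairT (π.p t) t t' hne htT htT'
    linarith [h1.2, h2.2]
  have hndTR : (π.seg (i2 + 1) π.l).Nodup := by
    rw [seg]
    refine Multiset.Nodup.map_on ?_ (Finset.Icc (i2+1) π.l).nodup
    intro t ht t' ht' hpe
    by_contra hne
    rw [Finset.mem_val] at ht ht'
    have h1 := (memTR t).mp ht
    have h2 := (memTR t').mp ht'
    have htT : t ∈ π.Tocc (π.p t) := π.mem_Tocc.mpr ⟨h1.1, rfl⟩
    have htT' : t' ∈ π.Tocc (π.p t) := π.mem_Tocc.mpr ⟨h2.1, hpe.symm⟩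
    have := hpairT (π.p t) t t' hne htT htT'
    linarith [h1.2, h2.2]
  have hndBL : (π.seg (π.l + 1) (π.l + j3)).Nodup := by
    rw [π.seg_bot_eq' 1 j3 le_rfl]
    refine Multiset.Nodup.map_on ?_ (Finset.Icc 1 j3).nodup
    intro s hs s' hs' hpe
    by_contra hne
    rw [Finset.mem_val] at hs hs'
    have h1 := (memBL s).mp hs
    have h2 := (memBL s').mp hs'
    have hsS : s ∈ π.Socc (π.p (π.l + s)) := π.mem_Socc.mpr ⟨h1.1, rfl⟩
    have hsS' : s' ∈ π.Socc (π.p (π.l + s)) := π.mem_Socc.mpr ⟨h2.1, hpe.symm⟩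
    have := hpairS (π.p (π.l + s)) s s' hne hsS hsS'
    linarith [h1.2, h2.2]
  have hndBR : (π.seg (π.l + j4 + 1) (π.l + π.m)).Nodup := by
    rw [show π.l + j4 + 1 = π.l + (j4 + 1) from by omega, π.seg_bot_eq' (j4+1) π.m (by omega)]
    refine Multiset.Nodup.map_on ?_ (Finset.Icc (j4+1) π.m).nodup
    intro s hs s' hs' hpe
    by_contra hne
    rw [Finset.mem_val] at hs hs'
    have h1 := (memBR s).mp hs
    have h2 := (memBR s').mp hs'
    have hsS : s ∈ π.Socc (π.p (π.l + s)) := π.mem_Socc.mpr ⟨h1.1, rfl⟩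
    have hsS' : s' ∈ π.Socc (π.p (π.l + s)) := π.mem_Socc.mpr ⟨h2.1, hpe.symm⟩
    have := hpairS (π.p (π.l + s)) s s' hne hsS hsS'
    linarith [h1.2, h2.2]
  -- the four corner identities
  have cTL : π.seg 1 i1 = As.val + Bs.val := by
    rw [(Multiset.Nodup.ext hndTL (nodup_disjUnion_val dAB))]
    intro a
    rw [Multiset.mem_add, Finset.mem_val, Finset.mem_val, memseg_top]
    constructor
    · rintro ⟨t, ht, rfl⟩
      have h1 := (memTL t).mp ht
      have htT : t ∈ π.Tocc (π.p t) := π.mem_Tocc.mpr ⟨h1.1, rfl⟩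
      rcases hcard12T _ t htT with hc | hc
      · exact Or.inl ((memAs _).mpr ⟨hc, t, htT, h1.2⟩)
      · exact Or.inr ((memBs _).mpr ⟨hc, t, htT, ne_of_gt h1.2⟩)
    · rintro (ha | ha)
      · obtain ⟨hc1, t0, ht0, hpos⟩ := (memAs a).mp ha
        have hm := π.mem_Tocc.mp ht0
        exact ⟨t0, (memTL t0).mpr ⟨hm.1, hpos⟩, hm.2⟩
      · obtain ⟨hc2, hex⟩ := (memBs a).mp ha
        obtain ⟨⟨t0, ht0, hpos⟩, -⟩ := hBsgn a hc2 hex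
        have hm := π.mem_Tocc.mp ht0
        exact ⟨t0, (memTL t0).mpr ⟨hm.1, hpos⟩, hm.2⟩
  have cTR : π.seg (i2 + 1) π.l = Ds.val + Bs.val := by
    rw [(Multiset.Nodup.ext hndTR (nodup_disjUnion_val dBD.symm))]
    intro a
    rw [Multiset.mem_add, Finset.mem_val, Finset.mem_val, memseg_top]
    constructor
    · rintro ⟨t, ht, rfl⟩
      have h1 := (memTR t).mp ht
      have htT : t ∈ π.Tocc (π.p t) := π.mem_Tocc.mpr ⟨h1.1, rfl⟩
      rcases hcard12T _ t htT with hc | hc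
      · exact Or.inl ((memDs _).mpr ⟨hc, t, htT, h1.2⟩)
      · exact Or.inr ((memBs _).mpr ⟨hc, t, htT, ne_of_lt h1.2⟩)
    · rintro (ha | ha)
      · obtain ⟨hc1, t0, ht0, hneg⟩ := (memDs a).mp ha
        have hm := π.mem_Tocc.mp ht0
        exact ⟨t0, (memTR t0).mpr ⟨hm.1, hneg⟩, hm.2⟩
      · obtain ⟨hc2, hex⟩ := (memBs a).mp ha
        obtain ⟨-, t0, ht0, hneg⟩ := hBsgn a hc2 hex
        have hm := π.mem_Tocc.mp ht0
        exact ⟨t0, (memTR t0).mpr ⟨hm.1, hneg⟩, hm.2⟩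
  have cBL : π.seg (π.l + 1) (π.l + j3) = As.val + Cs.val := by
    rw [(Multiset.Nodup.ext hndBL (nodup_disjUnion_val dAC))]
    intro a
    rw [Multiset.mem_add, Finset.mem_val, Finset.mem_val, memseg_bot 1 j3 le_rfl]
    constructor
    · rintro ⟨s, hs, rfl⟩
      have h1 := (memBL s).mp hs
      have hsS : s ∈ π.Socc (π.p (π.l + s)) := π.mem_Socc.mpr ⟨h1.1, rfl⟩
      rcases hcard12S _ s hsS with hc | hc
      · -- one occurrence on each line: letter of As
        have hcT : (π.Tocc (π.p (π.l + s))).card = 1 := by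
          have := π.card_occ (π.p (π.l + s)); omega
        obtain ⟨t0, s0, hT, hS, heq'⟩ := hone _ hcT
        have hs0 : s = s0 := by rw [hS, Finset.mem_singleton] at hsS; exact hsS
        subst hs0
        refine Or.inl ((memAs _).mpr ⟨hcT, t0, ?_, by rw [heq']; exact h1.2⟩)
        rw [hT]; exact Finset.mem_singleton_self _
      · exact Or.inr ((memCs _).mpr ⟨hc, s, hsS, ne_of_gt h1.2⟩)
    · rintro (ha | ha)
      · obtain ⟨hc1, t0', ht0', hpos⟩ := (memAs a).mp ha
        obtain ⟨t0, s0, hT, hS, heq'⟩ := hone a hc1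
        have ht00 : t0' = t0 := by rw [hT, Finset.mem_singleton] at ht0'; exact ht0'
        subst ht00
        have hs0S : s0 ∈ π.Socc a := by rw [hS]; exact Finset.mem_singleton_self _
        have hm := π.mem_Socc.mp hs0S
        exact ⟨s0, (memBL s0).mpr ⟨hm.1, by rw [← heq']; exact hpos⟩, hm.2⟩
      · obtain ⟨hc2, hex⟩ := (memCs a).mp ha
        obtain ⟨⟨s0, hs0, hpos⟩, -⟩ := hCsgn a hc2 hex
        have hm := π.mem_Socc.mp hs0
        exact ⟨s0, (memBL s0).mpr ⟨hm.1, hpos⟩, hm.2⟩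
  have cBR : π.seg (π.l + j4 + 1) π.size = Ds.val + Cs.val := by
    rw [hsize, (Multiset.Nodup.ext hndBR (nodup_disjUnion_val dCD.symm))]
    intro a
    rw [Multiset.mem_add, Finset.mem_val, Finset.mem_val,
      show π.l + j4 + 1 = π.l + (j4 + 1) from by omega, memseg_bot (j4+1) π.m (by omega)]
    constructor
    · rintro ⟨s, hs, rfl⟩
      have h1 := (memBR s).mp hs
      have hsS : s ∈ π.Socc (π.p (π.l + s)) := π.mem_Socc.mpr ⟨h1.1, rfl⟩
      rcases hcard12S _ s hsS with hc | hc
      · have hcT : (π.Tocc (π.p (π.l + s))).card = 1 := by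
          have := π.card_occ (π.p (π.l + s)); omega
        obtain ⟨t0, s0, hT, hS, heq'⟩ := hone _ hcT
        have hs0 : s = s0 := by rw [hS, Finset.mem_singleton] at hsS; exact hsS
        subst hs0
        refine Or.inl ((memDs _).mpr ⟨hcT, t0, ?_, by rw [heq']; exact h1.2⟩)
        rw [hT]; exact Finset.mem_singleton_self _
      · exact Or.inr ((memCs _).mpr ⟨hc, s, hsS, ne_of_lt h1.2⟩)
    · rintro (ha | ha)
      · obtain ⟨hc1, t0', ht0', hneg⟩ := (memDs a).mp ha
        obtain ⟨t0, s0, hT, hS, heq'⟩ := hone a hc1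
        have ht00 : t0' = t0 := by rw [hT, Finset.mem_singleton] at ht0'; exact ht0'
        subst ht00
        have hs0S : s0 ∈ π.Socc a := by rw [hS]; exact Finset.mem_singleton_self _
        have hm := π.mem_Socc.mp hs0S
        exact ⟨s0, (memBR s0).mpr ⟨hm.1, by rw [← heq']; exact hneg⟩, hm.2⟩
      · obtain ⟨hc2, hex⟩ := (memCs a).mp ha
        obtain ⟨-, s0, hs0, hneg⟩ := hCsgn a hc2 hex
        have hm := π.mem_Socc.mp hs0
        exact ⟨s0, (memBR s0).mpr ⟨hm.1, hneg⟩, hm.2⟩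
  -- nonemptiness translation
  have ne_iff : ∀ x y : ℕ, π.seg x y ≠ 0 ↔ x ≤ y := by
    intro x y
    rw [Ne, seg_eq_zero_iff, not_not]
  -- assemble, according to the sign of γ₀
  rcases lt_or_eq_of_le hγ0 with hγlt | hγeq
  · -- γ₀ < 0 : both right corners are nonempty
    have hi2lt : i2 < π.l := by
      have := (memTR π.l).mpr ⟨⟨by omega, le_refl _⟩, by rw [hAl]; exact hγlt⟩
      rw [Finset.mem_Icc] at this
      omega
    have hj4lt : j4 < π.m := by
      have := (memBR π.m).mpr ⟨⟨by omega, le_refl _⟩, by rw [hBm]; exact hγlt⟩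
      rw [Finset.mem_Icc] at this
      omega
    have TRne : π.seg (i2 + 1) π.l ≠ 0 := (ne_iff _ _).mpr (by omega)
    have BRne : π.seg (π.l + j4 + 1) π.size ≠ 0 := (ne_iff _ _).mpr (by rw [hsize]; omega)
    have hnea : ¬(As = ∅ ∧ Bs = ∅ ∧ Cs = ∅ ∧ Ds = ∅) := by
      rintro ⟨hA, hB, hC, hD⟩
      apply TRne
      rw [cTR, hD, hB]
      simp
    refine ⟨As, Bs, Cs, Ds, i1, i2, π.l + j3, π.l + j4, dAB, dAC, dAD, dBC, dBD, dCD, hnea,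
      hi12, hi2l, by omega, by omega, by rw [hsize]; omega, cTL, cTR, cBL, cBR, ?_⟩
    by_cases hTL0 : π.seg 1 i1 = 0 <;> by_cases hBL0 : π.seg (π.l + 1) (π.l + j3) = 0
    · exact Or.inr (Or.inr (Or.inr (Or.inl ⟨hTL0, TRne, hBL0, BRne⟩)))
    · exact Or.inr (Or.inl ⟨hTL0, TRne, hBL0, BRne⟩)
    · exact Or.inr (Or.inr (Or.inl ⟨hTL0, TRne, hBL0, BRne⟩))
    · exact Or.inl ⟨hTL0, TRne, hBL0, BRne⟩
  · -- γ₀ = 0 : both right corners are empty, both left corners are nonempty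
    have hAnn : ∀ t, 0 ≤ π.Atop α γ₀ t := by
      intro t; have := hAge t; linarith
    have hBnn : ∀ s, 0 ≤ π.Bbot β γ₀ s := by
      intro s; have := hBge s; linarith
    have hi2eq : i2 = π.l := by
      rw [hi2, Finset.filter_true_of_mem (fun t _ => hAnn t), Nat.card_Icc]
      omega
    have hj4eq : j4 = π.m := by
      rw [hj4, Finset.filter_true_of_mem (fun s _ => hBnn s), Nat.card_Icc]
      omega
    have TR0 : π.seg (i2 + 1) π.l = 0 := seg_eq_zero_iff π |>.mpr (by omega)
    have BR0 : π.seg (π.l + j4 + 1) π.size = 0 := seg_eq_zero_iff π |>.mpr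
      (by rw [hsize]; omega)
    have htop_imp : (∃ t, (1 ≤ t ∧ t ≤ π.l) ∧ 0 < π.Atop α γ₀ t) → 1 ≤ i1 ∧ 1 ≤ j3 := by
      rintro ⟨t, htl, hpos⟩
      have hti1 : t ∈ Finset.Icc 1 i1 := (memTL t).mpr ⟨htl, hpos⟩
      rw [Finset.mem_Icc] at hti1
      refine ⟨by omega, ?_⟩
      have htT : t ∈ π.Tocc (π.p t) := π.mem_Tocc.mpr ⟨htl, rfl⟩
      rcases hcard12T _ t htT with hc | hc
      · obtain ⟨t0, s0, hT, hS, heq'⟩ := hone _ hc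
        have ht00 : t = t0 := by rw [hT, Finset.mem_singleton] at htT; exact htT
        subst ht00
        have hs0S : s0 ∈ π.Socc (π.p t) := by rw [hS]; exact Finset.mem_singleton_self _
        have hm := π.mem_Socc.mp hs0S
        have := (memBL s0).mpr ⟨hm.1, by rw [← heq']; exact hpos⟩
        rw [Finset.mem_Icc] at this
        omega
      · exfalso
        obtain ⟨t1, t2, hne, hT⟩ := Finset.card_eq_two.mp hc
        have h1 : t1 ∈ π.Tocc (π.p t) := by rw [hT]; exact Finset.mem_insert_self _ _
        have h2 : t2 ∈ π.Tocc (π.p t) := by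
          rw [hT]; exact Finset.mem_insert_of_mem (Finset.mem_singleton_self _)
        have hsum := hpairT _ t1 t2 hne h1 h2
        have ht' : t = t1 ∨ t = t2 := by rw [hT] at htT; simpa using htT
        rcases ht' with rfl | rfl
        · have := hAnn t2; linarith
        · have := hAnn t1; linarith
    have hbot_imp : (∃ s, (1 ≤ s ∧ s ≤ π.m) ∧ 0 < π.Bbot β γ₀ s) → 1 ≤ i1 ∧ 1 ≤ j3 := by
      rintro ⟨s, hsl, hpos⟩
      have hsj3 : s ∈ Finset.Icc 1 j3 := (memBL s).mpr ⟨hsl, hpos⟩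
      rw [Finset.mem_Icc] at hsj3
      refine ⟨?_, by omega⟩
      have hsS : s ∈ π.Socc (π.p (π.l + s)) := π.mem_Socc.mpr ⟨hsl, rfl⟩
      rcases hcard12S _ s hsS with hc | hc
      · have hcT : (π.Tocc (π.p (π.l + s))).card = 1 := by
          have := π.card_occ (π.p (π.l + s)); omega
        obtain ⟨t0, s0, hT, hS, heq'⟩ := hone _ hcT
        have hs00 : s = s0 := by rw [hS, Finset.mem_singleton] at hsS; exact hsS
        subst hs00
        have ht0T : t0 ∈ π.Tocc (π.p (π.l + s)) := by rw [hT]; exact Finset.mem_singleton_self _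
        have hm := π.mem_Tocc.mp ht0T
        have := (memTL t0).mpr ⟨hm.1, by rw [heq']; exact hpos⟩
        rw [Finset.mem_Icc] at this
        omega
      · exfalso
        obtain ⟨s1, s2, hne, hS⟩ := Finset.card_eq_two.mp hc
        have h1 : s1 ∈ π.Socc (π.p (π.l + s)) := by rw [hS]; exact Finset.mem_insert_self _ _
        have h2 : s2 ∈ π.Socc (π.p (π.l + s)) := by
          rw [hS]; exact Finset.mem_insert_of_mem (Finset.mem_singleton_self _)
        have hsum := hpairS _ s1 s2 hne h1 h2
        have hs' : s = s1 ∨ s = s2 := by rw [hS] at hsS; simpa using hsS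
        rcases hs' with rfl | rfl
        · have := hBnn s2; linarith
        · have := hBnn s1; linarith
    have hkey : 1 ≤ i1 ∧ 1 ≤ j3 := by
      have hex : (∃ n, n ∈ Finset.Icc 1 (π.l - 1) ∧ 0 < α n) ∨
          (∃ n, n ∈ Finset.Icc 1 (π.m - 1) ∧ 0 < β n) := by
        by_contra hcon
        push_neg at hcon
        obtain ⟨hc1, hc2⟩ := hcon
        have e1 : ∑ n ∈ Finset.Icc 1 (π.l - 1), α n = 0 :=
          Finset.sum_eq_zero (fun n hn => le_antisymm (hc1 n hn) (hα n))
        have e2 : ∑ n ∈ Finset.Icc 1 (π.m - 1), β n = 0 :=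
          Finset.sum_eq_zero (fun n hn => le_antisymm (hc2 n hn) (hβ n))
        rw [e1, e2] at hnontriv
        norm_num at hnontriv
      rcases hex with ⟨n, hn, hpos⟩ | ⟨n, hn, hpos⟩
      · rw [Finset.mem_Icc] at hn
        apply htop_imp
        refine ⟨n, ⟨hn.1, by omega⟩, ?_⟩
        have hle : α n ≤ ∑ k ∈ Finset.Icc n (π.l - 1), α k :=
          Finset.single_le_sum (fun k _ => hα k) (Finset.mem_Icc.mpr ⟨le_refl n, hn.2⟩)
        unfold Atop
        rw [hγeq]
        linarith
      · rw [Finset.mem_Icc] at hn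
        apply hbot_imp
        refine ⟨n, ⟨hn.1, by omega⟩, ?_⟩
        have hle : β n ≤ ∑ k ∈ Finset.Icc n (π.m - 1), β k :=
          Finset.single_le_sum (fun k _ => hβ k) (Finset.mem_Icc.mpr ⟨le_refl n, hn.2⟩)
        unfold Bbot
        rw [hγeq]
        linarith
    have TLne : π.seg 1 i1 ≠ 0 := (ne_iff _ _).mpr hkey.1
    have BLne : π.seg (π.l + 1) (π.l + j3) ≠ 0 := (ne_iff _ _).mpr (by omega)
    have hnea : ¬(As = ∅ ∧ Bs = ∅ ∧ Cs = ∅ ∧ Ds = ∅) := by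
      rintro ⟨hA, hB, hC, hD⟩
      apply TLne
      rw [cTL, hA, hB]
      simp
    exact ⟨As, Bs, Cs, Ds, i1, i2, π.l + j3, π.l + j4, dAB, dAC, dAD, dBC, dBD, dCD, hnea,
      hi12, hi2l, by omega, by omega, by rw [hsize]; omega, cTL, cTR, cBL, cBR,
      Or.inr (Or.inr (Or.inr (Or.inr ⟨TLne, TR0, BLne, BR0⟩)))⟩

end GenPerm
namespace GenPerm

variable {A : Type*} [DecidableEq A] (π : GenPerm A)

/-- The number of occurrences of `a` among the top positions `1, …, n` (as a real number). -/
noncomputable def vtop (n : ℕ) (a : A) : ℝ :=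
  (((Finset.Icc 1 n).filter (fun t => π.p t = a)).card : ℝ)

/-- The number of occurrences of `a` among the bottom positions `l+1, …, l+n`
(as a real number). -/
noncomputable def vbot (n : ℕ) (a : A) : ℝ :=
  (((Finset.Icc 1 n).filter (fun s => π.p (π.l + s) = a)).card : ℝ)

lemma sum_fiber_top [Fintype A] (f : A → ℝ) (k : ℕ) :
    ∑ a : A, π.vtop k a * f a = ∑ j ∈ Finset.Icc 1 k, f (π.p j) := by
  classical
  rw [← Finset.sum_fiberwise_of_maps_to (g := π.p) (fun x _ => Finset.mem_univ (π.p x))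
    (fun j => f (π.p j))]
  apply Finset.sum_congr rfl
  intro a _
  rw [Finset.sum_congr rfl (g := fun _ => f a)
    (fun j hj => by rw [(Finset.mem_filter.mp hj).2]), Finset.sum_const, nsmul_eq_mul, vtop]

lemma sum_fiber_bot [Fintype A] (f : A → ℝ) (k : ℕ) :
    ∑ a : A, π.vbot k a * f a = ∑ j ∈ Finset.Icc 1 k, f (π.p (π.l + j)) := by
  classical
  rw [← Finset.sum_fiberwise_of_maps_to (g := fun j => π.p (π.l + j))
    (fun x _ => Finset.mem_univ _) (fun j => f (π.p (π.l + j)))]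
  apply Finset.sum_congr rfl
  intro a _
  rw [Finset.sum_congr rfl (g := fun _ => f a)
    (fun j hj => by rw [(Finset.mem_filter.mp hj).2]), Finset.sum_const, nsmul_eq_mul, vbot]

lemma vtop_top_eq (a : A) : π.vtop π.l a = ((π.Tocc a).card : ℝ) := rfl

lemma vbot_bot_eq (a : A) : π.vbot π.m a = ((π.Socc a).card : ℝ) := rfl

lemma top_weight_rearrange (α : ℕ → ℝ) (γ₀ : ℝ) (a : A) :
    ∑ t ∈ π.Tocc a, π.Atop α γ₀ t
      = (∑ n ∈ Finset.Icc 1 (π.l - 1), α n * π.vtop n a) + γ₀ * π.vtop π.l a := by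
  classical
  have h1 : ∀ t ∈ π.Tocc a,
      Finset.Icc t (π.l - 1) = (Finset.Icc 1 (π.l - 1)).filter (fun n => t ≤ n) := by
    intro t ht
    have h1t := (π.mem_Tocc.mp ht).1.1
    ext n
    simp only [Finset.mem_Icc, Finset.mem_filter]
    omega
  have h2 : ∀ n ∈ Finset.Icc 1 (π.l - 1),
      (π.Tocc a).filter (fun t => t ≤ n) = (Finset.Icc 1 n).filter (fun t => π.p t = a) := by
    intro n hn
    have hn' := Finset.mem_Icc.mp hn
    ext t
    simp only [Finset.mem_filter, Finset.mem_Icc, Tocc]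
    constructor
    · rintro ⟨⟨⟨ht1, ht2⟩, hp⟩, hle⟩
      exact ⟨⟨ht1, hle⟩, hp⟩
    · rintro ⟨⟨ht1, hle⟩, hp⟩
      exact ⟨⟨⟨ht1, by omega⟩, hp⟩, hle⟩
  calc ∑ t ∈ π.Tocc a, π.Atop α γ₀ t
      = ∑ t ∈ π.Tocc a,
        ((∑ n ∈ (Finset.Icc 1 (π.l - 1)).filter (fun n => t ≤ n), α n) + γ₀) := by
        refine Finset.sum_congr rfl (fun t ht => ?_)
        rw [Atop, h1 t ht]
    _ = (∑ t ∈ π.Tocc a, ∑ n ∈ Finset.Icc 1 (π.l - 1), if t ≤ n then α n else 0)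
        + γ₀ * (π.Tocc a).card := by
        rw [Finset.sum_add_distrib, Finset.sum_const, nsmul_eq_mul, mul_comm]
        congr 1
        exact Finset.sum_congr rfl (fun t _ => Finset.sum_filter _ _)
    _ = (∑ n ∈ Finset.Icc 1 (π.l - 1), ∑ t ∈ π.Tocc a, if t ≤ n then α n else 0)
        + γ₀ * (π.Tocc a).card := by rw [Finset.sum_comm]
    _ = (∑ n ∈ Finset.Icc 1 (π.l - 1), α n * π.vtop n a) + γ₀ * π.vtop π.l a := by
        rw [vtop_top_eq]
        congr 1
        refine Finset.sum_congr rfl (fun n hn => ?_)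
        rw [← Finset.sum_filter, h2 n hn, Finset.sum_const, nsmul_eq_mul, vtop, mul_comm]

lemma bot_weight_rearrange (β : ℕ → ℝ) (γ₀ : ℝ) (a : A) :
    ∑ s ∈ π.Socc a, π.Bbot β γ₀ s
      = (∑ n ∈ Finset.Icc 1 (π.m - 1), β n * π.vbot n a) + γ₀ * π.vbot π.m a := by
  classical
  have h1 : ∀ s ∈ π.Socc a,
      Finset.Icc s (π.m - 1) = (Finset.Icc 1 (π.m - 1)).filter (fun n => s ≤ n) := by
    intro s hs
    have h1s := (π.mem_Socc.mp hs).1.1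
    ext n
    simp only [Finset.mem_Icc, Finset.mem_filter]
    omega
  have h2 : ∀ n ∈ Finset.Icc 1 (π.m - 1),
      (π.Socc a).filter (fun s => s ≤ n)
        = (Finset.Icc 1 n).filter (fun s => π.p (π.l + s) = a) := by
    intro n hn
    have hn' := Finset.mem_Icc.mp hn
    ext s
    simp only [Finset.mem_filter, Finset.mem_Icc, Socc]
    constructor
    · rintro ⟨⟨⟨hs1, hs2⟩, hp⟩, hle⟩
      exact ⟨⟨hs1, hle⟩, hp⟩
    · rintro ⟨⟨hs1, hle⟩, hp⟩
      exact ⟨⟨⟨hs1, by omega⟩, hp⟩, hle⟩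
  calc ∑ s ∈ π.Socc a, π.Bbot β γ₀ s
      = ∑ s ∈ π.Socc a,
        ((∑ n ∈ (Finset.Icc 1 (π.m - 1)).filter (fun n => s ≤ n), β n) + γ₀) := by
        refine Finset.sum_congr rfl (fun s hs => ?_)
        rw [Bbot, h1 s hs]
    _ = (∑ s ∈ π.Socc a, ∑ n ∈ Finset.Icc 1 (π.m - 1), if s ≤ n then β n else 0)
        + γ₀ * (π.Socc a).card := by
        rw [Finset.sum_add_distrib, Finset.sum_const, nsmul_eq_mul, mul_comm]
        congr 1
        exact Finset.sum_congr rfl (fun s _ => Finset.sum_filter _ _)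
    _ = (∑ n ∈ Finset.Icc 1 (π.m - 1), ∑ s ∈ π.Socc a, if s ≤ n then β n else 0)
        + γ₀ * (π.Socc a).card := by rw [Finset.sum_comm]
    _ = (∑ n ∈ Finset.Icc 1 (π.m - 1), β n * π.vbot n a) + γ₀ * π.vbot π.m a := by
        rw [vbot_bot_eq]
        congr 1
        refine Finset.sum_congr rfl (fun n hn => ?_)
        rw [← Finset.sum_filter, h2 n hn, Finset.sum_const, nsmul_eq_mul, vbot, mul_comm]

end GenPerm
section Gordan

local notation "⟪" x ", " y "⟫" => @inner ℝ _ _ x y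

lemma gordan_aux {E : Type*} [NormedAddCommGroup E] [InnerProductSpace ℝ E]
    [FiniteDimensional ℝ E] {ι : Type*} [Fintype ι] [Nonempty ι] (u : ι → E) (e : E) :
    (∃ h : E, ⟪e, h⟫ = 0 ∧ ∀ k, 0 < ⟪u k, h⟫) ∨
    (∃ c : ι → ℝ, (∀ k, 0 ≤ c k) ∧ (∑ k, c k = 1) ∧ ∃ γ : ℝ, ∑ k, c k • u k = γ • e) := by
  classical
  set K : Submodule ℝ E := (ℝ ∙ e)ᗮ with hK
  set P : E →L[ℝ] K := K.orthogonalProjectionOnto with hP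
  set G : (ι → ℝ) →ₗ[ℝ] E := ∑ k : ι, (LinearMap.proj k : (ι → ℝ) →ₗ[ℝ] ℝ).smulRight (u k)
    with hG
  have hGapp : ∀ c : ι → ℝ, G c = ∑ k, c k • u k := by
    intro c
    simp [hG, LinearMap.sum_apply]
  set F : (ι → ℝ) →ₗ[ℝ] E := (K.subtype.comp P.toLinearMap).comp G with hF
  have hFapp : ∀ c : ι → ℝ, F c = (P (G c) : E) := fun c => rfl
  have hFcont : Continuous F := F.continuous_of_finiteDimensional
  set S : Set E := F '' stdSimplex ℝ ι with hS
  by_cases h0 : (0 : E) ∈ S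
  · right
    obtain ⟨c, hc, hc0⟩ := h0
    refine ⟨c, hc.1, hc.2, ?_⟩
    have : (∑ k, c k • u k) ∈ Kᗮ := by
      rw [← Submodule.orthogonalProjectionOnto_eq_zero_iff (K := K)]
      have : ((K.orthogonalProjectionOnto (G c) : K) : E) = 0 := by
        rw [← hFapp]; exact hc0
      rw [← hGapp]
      exact_mod_cast Submodule.coe_eq_zero.mp this
    rw [hK, Submodule.orthogonal_orthogonal, Submodule.mem_span_singleton] at this
    obtain ⟨γ, hγ⟩ := this
    exact ⟨γ, hγ.symm⟩
  · left
    have hScv : Convex ℝ S := (convex_stdSimplex ℝ ι).linear_image F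
    have hScp : IsCompact S := (isCompact_stdSimplex ℝ ι).image hFcont
    obtain ⟨f, s, t, hfs, hst, hft⟩ := geometric_hahn_banach_compact_closed hScv hScp
      (convex_singleton 0) isClosed_singleton (Set.disjoint_singleton_right.mpr h0)
    have hf0 : t < 0 := by simpa using hft 0 rfl
    set w : E := (InnerProductSpace.toDual ℝ E).symm f with hw
    have hwapp : ∀ x, ⟪w, x⟫ = f x := fun x => InnerProductSpace.toDual_symm_apply
    refine ⟨-(P w : E), ?_, ?_⟩
    · have : ((P w : K) : E) ∈ (ℝ ∙ e)ᗮ := (P w).2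
      have he := (Submodule.mem_orthogonal (ℝ ∙ e) _).mp this e
        (Submodule.mem_span_singleton_self e)
      rw [inner_neg_right, he, neg_zero]
    · intro k
      have hmem : F (Pi.single k 1) ∈ S := ⟨_, single_mem_stdSimplex ℝ k, rfl⟩
      have hFk : F (Pi.single k 1) = (P (u k) : E) := by
        rw [hFapp, hGapp]
        congr 1
        rw [Finset.sum_eq_single k]
        · simp
        · intro b _ hb; simp [Pi.single_apply, hb]
        · simp
      have h1 : f (F (Pi.single k 1)) < s := hfs _ hmem
      rw [hFk] at h1
      have h2 : ⟪u k, -(P w : E)⟫ = -⟪(P (u k) : E), w⟫ := by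
        rw [inner_neg_right, hP, Submodule.coe_orthogonalProjectionOnto_apply,
          Submodule.coe_orthogonalProjectionOnto_apply, Submodule.inner_starProjection_left_eq_right]
      rw [h2, real_inner_comm, hwapp]
      have : f ((P (u k) : E)) < 0 := lt_trans h1 (lt_trans hst hf0)
      linarith

end Gordan

namespace GenPerm

variable {A : Type*} [DecidableEq A] (π : GenPerm A)

theorem exists_suspension_of_irreducible [Fintype A] (hconv : π.Convention)
    (hirr : π.Irreducible) (lam : A → ℝ) (hpos : ∀ a, 0 < lam a)
    (hsum : π.topSumR lam π.l = π.botSumR lam π.m) :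
    ∃ ζ : A → ℂ, π.IsSuspension ζ ∧ ∀ a, (ζ a).re = lam a := by
  classical
  have hl2 := π.two_le_l hconv
  have hm2 := π.two_le_m hconv
  set V : (A → ℝ) ≃ EuclideanSpace ℝ A := (WithLp.equiv 2 (A → ℝ)).symm with hV
  have hVapp : ∀ (f : A → ℝ) (a : A), V f a = f a := fun f a => rfl
  have innerV : ∀ (f : A → ℝ) (x : EuclideanSpace ℝ A),
      (inner ℝ (V f) x : ℝ) = ∑ a, f a * x a := by
    intro f x
    rw [PiLp.inner_apply]
    exact Finset.sum_congr rfl (fun a _ => by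
      rw [RCLike.inner_apply, hVapp, starRingEnd_apply, star_trivial, mul_comm])
  set ι := (↥(Finset.Icc 1 (π.l - 1))) ⊕ (↥(Finset.Icc 1 (π.m - 1))) with hι
  haveI : Nonempty ι := ⟨Sum.inl ⟨1, Finset.mem_Icc.mpr ⟨le_rfl, by omega⟩⟩⟩
  set u : ι → EuclideanSpace ℝ A :=
    Sum.elim (fun n : ↥(Finset.Icc 1 (π.l - 1)) => V (π.vtop ↑n))
      (fun n : ↥(Finset.Icc 1 (π.m - 1)) => V (fun a => -(π.vbot ↑n a))) with hu
  set e : EuclideanSpace ℝ A := V (fun a => π.vtop π.l a - π.vbot π.m a) with he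
  rcases gordan_aux u e with ⟨h, he0, hpos'⟩ | ⟨c, hc0, hc1, γ, hγ⟩
  · -- a suspension exists
    set τ : A → ℝ := fun a => h a with hτ
    have htopsum : ∀ k, ∑ a, π.vtop k a * h a = π.topSumR τ k := by
      intro k; rw [topSumR]; exact π.sum_fiber_top τ k
    have hbotsum : ∀ k, ∑ a, π.vbot k a * h a = π.botSumR τ k := by
      intro k; rw [botSumR]; exact π.sum_fiber_bot τ k
    refine ⟨fun a => ⟨lam a, τ a⟩, ⟨fun a => hpos a, ?_, ?_, ?_⟩, fun a => rfl⟩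
    · intro i h1 h2
      have hi : i ∈ Finset.Icc 1 (π.l - 1) := Finset.mem_Icc.mpr ⟨h1, h2⟩
      have hp := hpos' (Sum.inl ⟨i, hi⟩)
      rw [hu, Sum.elim_inl, innerV, htopsum] at hp
      have him : (π.topSum (fun a => ⟨lam a, τ a⟩) i).im = π.topSumR τ i := by
        rw [topSum, topSumR, Complex.im_sum]
      rw [him]
      exact hp
    · intro i h1 h2
      have hi : i ∈ Finset.Icc 1 (π.m - 1) := Finset.mem_Icc.mpr ⟨h1, h2⟩
      have hp := hpos' (Sum.inr ⟨i, hi⟩)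
      rw [hu, Sum.elim_inr, innerV] at hp
      have hneg : ∑ a, -(π.vbot (↑(⟨i, hi⟩ : ↥(Finset.Icc 1 (π.m - 1)))) a) * h a
          = -(π.botSumR τ i) := by
        rw [← hbotsum]
        rw [← Finset.sum_neg_distrib]
        exact Finset.sum_congr rfl (fun a _ => by ring)
      rw [hneg] at hp
      have him : (π.botSum (fun a => ⟨lam a, τ a⟩) i).im = π.botSumR τ i := by
        rw [botSum, botSumR, Complex.im_sum]
      rw [him]
      linarith
    · have h0 := he0
      rw [he, innerV] at h0
      have : π.topSumR τ π.l - π.botSumR τ π.m = 0 := by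
        rw [← htopsum, ← hbotsum, ← Finset.sum_sub_distrib]
        rw [← h0]
        exact Finset.sum_congr rfl (fun a _ => by ring)
      apply Complex.ext
      · have hretop : (π.topSum (fun a => ⟨lam a, τ a⟩) π.l).re = π.topSumR lam π.l := by
          rw [topSum, topSumR, Complex.re_sum]
        have hrebot : (π.botSum (fun a => ⟨lam a, τ a⟩) π.m).re = π.botSumR lam π.m := by
          rw [botSum, botSumR, Complex.re_sum]
        rw [hretop, hrebot, hsum]
      · have himtop : (π.topSum (fun a => ⟨lam a, τ a⟩) π.l).im = π.topSumR τ π.l := by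
          rw [topSum, topSumR, Complex.im_sum]
        have himbot : (π.botSum (fun a => ⟨lam a, τ a⟩) π.m).im = π.botSumR τ π.m := by
          rw [botSum, botSumR, Complex.im_sum]
        rw [himtop, himbot]
        linarith
  · -- contradiction with irreducibility
    exfalso
    apply hirr
    set α : ℕ → ℝ := fun n =>
      if hn : n ∈ Finset.Icc 1 (π.l - 1) then c (Sum.inl ⟨n, hn⟩) else 0 with hα
    set β : ℕ → ℝ := fun n =>
      if hn : n ∈ Finset.Icc 1 (π.m - 1) then c (Sum.inr ⟨n, hn⟩) else 0 with hβ
    have hα0 : ∀ n, 0 ≤ α n := by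
      intro n
      rw [hα]
      dsimp only
      split
      · exact hc0 _
      · exact le_refl 0
    have hβ0 : ∀ n, 0 ≤ β n := by
      intro n
      rw [hβ]
      dsimp only
      split
      · exact hc0 _
      · exact le_refl 0
    have hαval : ∀ n : ↥(Finset.Icc 1 (π.l - 1)), α ↑n = c (Sum.inl n) := fun n => dif_pos n.2
    have hβval : ∀ n : ↥(Finset.Icc 1 (π.m - 1)), β ↑n = c (Sum.inr n) := fun n => dif_pos n.2
    have hsumL : ∀ w : ℕ → ℝ, ∑ n ∈ Finset.Icc 1 (π.l - 1), α n * w n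
        = ∑ n ∈ (Finset.Icc 1 (π.l - 1)).attach, c (Sum.inl n) * w ↑n := by
      intro w
      rw [← Finset.sum_attach (Finset.Icc 1 (π.l - 1)) (fun n => α n * w n)]
      exact Finset.sum_congr rfl (fun n _ => by rw [hαval n])
    have hsumR : ∀ w : ℕ → ℝ, ∑ n ∈ Finset.Icc 1 (π.m - 1), β n * w n
        = ∑ n ∈ (Finset.Icc 1 (π.m - 1)).attach, c (Sum.inr n) * w ↑n := by
      intro w
      rw [← Finset.sum_attach (Finset.Icc 1 (π.m - 1)) (fun n => β n * w n)]
      exact Finset.sum_congr rfl (fun n _ => by rw [hβval n])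
    apply π.reducible_of_certificate hconv α β hα0 hβ0 (-γ)
    · -- nontriviality
      have h1 : ∑ n ∈ Finset.Icc 1 (π.l - 1), α n
          = ∑ n ∈ (Finset.Icc 1 (π.l - 1)).attach, c (Sum.inl n) := by
        have := hsumL (fun _ => 1)
        simpa using this
      have h2 : ∑ n ∈ Finset.Icc 1 (π.m - 1), β n
          = ∑ n ∈ (Finset.Icc 1 (π.m - 1)).attach, c (Sum.inr n) := by
        have := hsumR (fun _ => 1)
        simpa using this
      rw [h1, h2]
      rw [Fintype.sum_sum_type] at hc1
      rw [← hc1, Finset.univ_eq_attach, Finset.univ_eq_attach]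
    · -- the per-letter equations
      intro a
      rw [π.top_weight_rearrange, π.bot_weight_rearrange]
      have hsingle : ∀ x : EuclideanSpace ℝ A,
          (inner ℝ (EuclideanSpace.single a (1:ℝ)) x : ℝ) = x a := by
        intro x
        rw [EuclideanSpace.inner_single_left]
        simp
      have h1 : (inner ℝ (EuclideanSpace.single a (1:ℝ)) (∑ k, c k • u k) : ℝ)
          = (inner ℝ (EuclideanSpace.single a (1:ℝ)) (γ • e) : ℝ) := by rw [hγ]
      rw [inner_sum, real_inner_smul_right, hsingle] at h1
      have h2 : ∀ k : ι, (inner ℝ (EuclideanSpace.single a (1:ℝ)) (c k • u k) : ℝ)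
          = c k * u k a := by
        intro k
        rw [real_inner_smul_right, hsingle]
      rw [Finset.sum_congr rfl (fun k _ => h2 k)] at h1
      have h3 : ∑ k : ι, c k * u k a
          = (∑ n ∈ Finset.Icc 1 (π.l - 1), α n * π.vtop n a)
            - ∑ n ∈ Finset.Icc 1 (π.m - 1), β n * π.vbot n a := by
        rw [Fintype.sum_sum_type, Finset.univ_eq_attach, Finset.univ_eq_attach,
          hsumL (fun n => π.vtop n a), hsumR (fun n => π.vbot n a)]
        have hL : ∀ n : ↥(Finset.Icc 1 (π.l - 1)), c (Sum.inl n) * u (Sum.inl n) a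
            = c (Sum.inl n) * π.vtop ↑n a := by
          intro n; rw [hu, Sum.elim_inl, hVapp]
        have hR : ∀ n : ↥(Finset.Icc 1 (π.m - 1)), c (Sum.inr n) * u (Sum.inr n) a
            = -(c (Sum.inr n) * π.vbot ↑n a) := by
          intro n; rw [hu, Sum.elim_inr, hVapp]; ring
        rw [Finset.sum_congr rfl (fun n _ => hL n), Finset.sum_congr rfl (fun n _ => hR n)]
        rw [Finset.sum_neg_distrib]
        ring
      have h4 : e a = π.vtop π.l a - π.vbot π.m a := by rw [he, hVapp]
      rw [h3, h4] at h1
      linarith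
end GenPerm
/-- A generalized permutation `π` (satisfying the convention), together
with positive length data `λ` with equal top and bottom total sums, admits a suspension
data `ζ` with `Re ζ_α = λ_α` if and only if `π` is irreducible. -/
theorem genPerm_suspension_iff_irreducible {A : Type*} [DecidableEq A] (π : GenPerm A)
    (hconv : π.Convention) (lam : A → ℝ) (hpos : ∀ a, 0 < lam a)
    (hsum : π.topSumR lam π.l = π.botSumR lam π.m) :
    (∃ ζ : A → ℂ, π.IsSuspension ζ ∧ ∀ a, (ζ a).re = lam a) ↔ π.Irreducible := by
  constructor
  · rintro ⟨ζ, hζ, -⟩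
    exact π.irreducible_of_suspension hconv ζ hζ
  · intro hirr
    have hfin : Finite A := by
      apply Finite.of_surjective (fun i : ↥(Finset.Icc 1 π.size) => π.p ↑i)
      intro a
      have h2 := π.double a
      have hne : ((Finset.Icc 1 (π.l + π.m)).filter (fun i => π.p i = a)).Nonempty := by
        rw [← Finset.card_pos, h2]
        norm_num
      obtain ⟨i, hi⟩ := hne
      have hmem := Finset.mem_filter.mp hi
      exact ⟨⟨i, hmem.1⟩, hmem.2⟩
    letI : Fintype A := Fintype.ofFinite A
    exact π.exists_suspension_of_irreducible hconv hirr lam hpos hsum
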